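/- A normally finitely generated normal subgroup N of a group G is R-invisible if and only if (N/[G,N]) ⊗_Z R = 0. -/

import Mathlib

open scoped TensorProduct

/-- The set of denominators of (reduced fractional expressions of) elements of `R ⊆ ℚ`. -/
def DR (R : Subring ℚ) : Set ℕ := {d | ∃ q ∈ R, q.den = d}

variable {G H A : Type*} [Group G] [Group H] [Group A]

/-- Evaluation of a monomial over `G` in `n` indeterminates at a tuple of elements of `G`. -/
noncomputable def evalWord {n : ℕ} (g : Fin n → G) :
    Monoid.Coprod G (FreeGroup (Fin n)) →* G :=
  Monoid.Coprod.lift (MonoidHom.id G) (FreeGroup.lift g)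

/-- The projection `G * F → F → F/[F,F]`. -/
noncomputable def toFreeAb (G : Type*) [Group G] (n : ℕ) :
    Monoid.Coprod G (FreeGroup (Fin n)) →* Abelianization (FreeGroup (Fin n)) :=
  Monoid.Coprod.lift 1 Abelianization.of

/-- An `R`-nullhomologous system of equations `xᵢ^e = wᵢ(x₁,…,xₙ)` over `G`. -/
structure NullSys (R : Subring ℚ) (G : Type*) [Group G] where
  n : ℕ
  e : ℕ
  he : e ∈ DR R
  w : Fin n → Monoid.Coprod G (FreeGroup (Fin n))
  nullh : ∀ i, toFreeAb G n (w i) = 1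

/-- A solution of a system of equations over `G`. -/
def NullSys.IsSolution {R : Subring ℚ} (S : NullSys R G) (g : Fin S.n → G) : Prop :=
  ∀ i, (g i) ^ S.e = evalWord g (S.w i)

/-- A group is `R`-closed if every `R`-nullhomologous system over it has a unique solution. -/
def IsRClosed (R : Subring ℚ) (A : Type*) [Group A] : Prop :=
  ∀ S : NullSys R A, ∃! g : Fin S.n → A, S.IsSolution g

/-- A normal subgroup `N ≤ G` is `R`-invisible if it is normally finitely generated and every
element of `N/[G,N]` has (finite) order lying in `D_R`. -/
def IsRInvisible (R : Subring ℚ) {G : Type*} [Group G] (N : Subgroup G) : Prop :=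
  N.Normal ∧
  (∃ s : Finset G, ↑s ⊆ (N : Set G) ∧ Subgroup.normalClosure ↑s = N) ∧
  ∀ x ∈ N, ∃ e ∈ DR R, x ^ e ∈ ⁅(⊤ : Subgroup G), N⁆

/-- The quotient `N/[G,N]` of a normal subgroup `N ≤ G`. -/
abbrev commQuot {G : Type*} [Group G] (N : Subgroup G) [N.Normal] : Type _ :=
  ↥N ⧸ ((⁅(⊤ : Subgroup G), N⁆).subgroupOf N)

noncomputable instance commQuotCommGroup {G : Type*} [Group G] (N : Subgroup G) [N.Normal] :
    CommGroup (commQuot N) :=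
  { (inferInstance : Group (commQuot N)) with
    mul_comm := by
      intro a b
      induction a using QuotientGroup.induction_on with
      | H x =>
      induction b using QuotientGroup.induction_on with
      | H y =>
      rw [← QuotientGroup.mk_mul, ← QuotientGroup.mk_mul, QuotientGroup.eq]
      rw [Subgroup.mem_subgroupOf]
      open scoped commutatorElement in
      have : (((x * y)⁻¹ * (y * x) : ↥N) : G) = ⁅((y : G))⁻¹, ((x : G))⁻¹⁆ := by
        simp [commutatorElement_def, mul_assoc]
      rw [this]
      exact Subgroup.commutator_mem_commutator (Subgroup.mem_top _) (N.inv_mem x.2) }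

/-- Membership in `DR R` in terms of invertibility in `R`. -/
lemma mem_DR_iff (R : Subring ℚ) (e : ℕ) :
    e ∈ DR R ↔ 0 < e ∧ ((e : ℚ))⁻¹ ∈ R := by
  constructor
  · rintro ⟨q, hq, rfl⟩
    refine ⟨q.pos, ?_⟩
    have hcop : IsCoprime (q.num) (q.den : ℤ) := by
      rw [Int.isCoprime_iff_gcd_eq_one]
      exact q.reduced
    obtain ⟨u, v, huv⟩ := hcop
    have hden : ((q.den : ℚ)) ≠ 0 := by
      exact_mod_cast q.den_nz
    have key : ((q.den : ℚ))⁻¹ = (u : ℚ) * q + (v : ℚ) := by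
      symm
      apply eq_inv_of_mul_eq_one_right
      have hq' : (q.num : ℚ) = q * (q.den : ℚ) := by
        exact (Rat.mul_den_eq_num q).symm
      have := congrArg (fun z : ℤ => (z : ℚ)) huv
      push_cast at this
      rw [hq'] at this
      linear_combination this
    rw [key]
    exact R.add_mem (R.mul_mem (intCast_mem R u) hq) (intCast_mem R v)
  · rintro ⟨hpos, hinv⟩
    exact ⟨((e : ℚ))⁻¹, hinv, Rat.inv_natCast_den_of_pos hpos⟩

/-- The submonoid of `ℤ` of denominators of elements of `R`. -/
def denS (R : Subring ℚ) : Submonoid ℤ where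
  carrier := {n : ℤ | 0 < n ∧ ((n : ℚ))⁻¹ ∈ R}
  one_mem' := by simp [R.one_mem]
  mul_mem' := by
    rintro a b ⟨ha, ha'⟩ ⟨hb, hb'⟩
    refine ⟨mul_pos ha hb, ?_⟩
    push_cast
    rw [mul_inv]
    exact R.mul_mem ha' hb'

lemma coe_denS (R : Subring ℚ) (s : denS R) :
    ((algebraMap ℤ R s : R) : ℚ) = ((s : ℤ) : ℚ) := by
  simp

lemma isLocalization_denS (R : Subring ℚ) : IsLocalization (denS R) R := by
  constructor
  constructor
  · intro s
    rw [isUnit_iff_exists_inv]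
    refine ⟨⟨((s : ℤ) : ℚ)⁻¹, s.2.2⟩, ?_⟩
    apply Subtype.ext
    push_cast [coe_denS]
    exact mul_inv_cancel₀ (by exact_mod_cast s.2.1.ne')
  · intro z
    have hden : ((z : ℚ).den : ℤ) ∈ denS R := by
      have : (z : ℚ).den ∈ DR R := ⟨(z : ℚ), z.2, rfl⟩
      rw [mem_DR_iff] at this
      exact ⟨by exact_mod_cast this.1, by exact_mod_cast this.2⟩
    refine ⟨⟨(z : ℚ).num, ⟨_, hden⟩⟩, ?_⟩
    apply Subtype.ext
    push_cast [coe_denS]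
    rw [mul_comm]
    exact_mod_cast Rat.den_mul_eq_num (z : ℚ)
  · intro a b h
    have : ((a : ℚ)) = ((b : ℚ)) := by
      have := congrArg (fun z : R => (z : ℚ)) h
      simpa using this
    refine ⟨1, ?_⟩
    have hab : a = b := by exact_mod_cast this
    rw [hab]

/-- The key module-theoretic fact: `R ⊗ M = 0` iff `M` is `D_R`-torsion. -/
lemma subsingleton_tensor_iff (R : Subring ℚ) (M : Type*) [AddCommGroup M] :
    Subsingleton (R ⊗[ℤ] M) ↔ ∀ m : M, ∃ e ∈ DR R, e • m = 0 := by
  haveI := isLocalization_denS R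
  set f : M →ₗ[ℤ] R ⊗[ℤ] M := TensorProduct.mk ℤ R M 1 with hf
  haveI : IsLocalizedModule (denS R) f :=
    (isLocalizedModule_iff_isBaseChange (denS R) R f).mpr (TensorProduct.isBaseChange ℤ M R)
  constructor
  · intro h m
    have h0 : f m = 0 := Subsingleton.elim _ _
    obtain ⟨s, hs⟩ := (IsLocalizedModule.eq_zero_iff (denS R) f).mp h0
    refine ⟨(s : ℤ).toNat, ?_, ?_⟩
    · rw [mem_DR_iff]
      constructor
      · have hs1 : 0 < (s : ℤ) := s.2.1
        omega
      · have : (((s : ℤ).toNat : ℚ)) = (((s : ℤ) : ℚ)) := by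
          exact_mod_cast congrArg (fun z : ℤ => (z : ℚ)) (Int.toNat_of_nonneg s.2.1.le)
        rw [this]
        exact s.2.2
    · have : ((s : ℤ).toNat : ℤ) • m = (s : ℤ) • m := by
        rw [Int.toNat_of_nonneg s.2.1.le]
      have hs' : ((s : ℤ)) • m = 0 := hs
      rw [← natCast_zsmul, this, hs']
  · intro h
    rw [subsingleton_iff_forall_eq 0]
    intro x
    induction x using TensorProduct.induction_on with
    | zero => rfl
    | add a b ha hb => rw [ha, hb, add_zero]
    | tmul r m =>
      obtain ⟨e, he, hm⟩ := h m
      rw [mem_DR_iff] at he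
      set r' : R := r * ⟨((e : ℚ))⁻¹, he.2⟩ with hr'
      have key : ((e : ℤ) • r') = r := by
        apply Subtype.ext
        rw [zsmul_eq_mul]
        have he0 : ((e : ℚ)) ≠ 0 := by exact_mod_cast he.1.ne'
        push_cast [hr']
        field_simp
      calc r ⊗ₜ[ℤ] m = ((e : ℤ) • r') ⊗ₜ[ℤ] m := by rw [key]
        _ = r' ⊗ₜ[ℤ] ((e : ℤ) • m) := TensorProduct.smul_tmul _ _ _
        _ = 0 := by rw [natCast_zsmul, hm, TensorProduct.tmul_zero]

/-- A normally finitely generated normal subgroup `N ≤ G` is `R`-invisible if and only if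
`(N/[G,N]) ⊗_ℤ R = 0`. -/
theorem isRInvisible_iff_tensor_eq_zero (R : Subring ℚ) {G : Type*} [Group G]
    (N : Subgroup G) [N.Normal]
    (hfg : ∃ s : Finset G, ↑s ⊆ (N : Set G) ∧ Subgroup.normalClosure ↑s = N) :
    IsRInvisible R N ↔ Subsingleton (Additive (commQuot N) ⊗[ℤ] R) := by
  have hcomm : Subsingleton (Additive (commQuot N) ⊗[ℤ] R) ↔
      Subsingleton (R ⊗[ℤ] Additive (commQuot N)) :=
    (TensorProduct.comm ℤ (Additive (commQuot N)) R).toEquiv.subsingleton_congr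
  rw [hcomm, subsingleton_tensor_iff]
  have hzero : ∀ (y : ↥N) (e : ℕ),
      (e • Additive.ofMul ((QuotientGroup.mk y : commQuot N)) = 0 ↔
        ((y : G)) ^ e ∈ ⁅(⊤ : Subgroup G), N⁆) := by
    intro y e
    rw [← ofMul_pow, ← QuotientGroup.mk_pow]
    constructor
    · intro h
      have h1 : (QuotientGroup.mk (y ^ e) : commQuot N) = 1 := h
      rw [QuotientGroup.eq_one_iff, Subgroup.mem_subgroupOf] at h1
      simpa using h1
    · intro h
      have h1 : (QuotientGroup.mk (y ^ e) : commQuot N) = 1 := by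
        rw [QuotientGroup.eq_one_iff, Subgroup.mem_subgroupOf]
        simpa using h
      exact h1
  constructor
  · rintro ⟨_, _, htor⟩ m
    obtain ⟨c, rfl⟩ : ∃ c : commQuot N, Additive.ofMul c = m := ⟨m, rfl⟩
    obtain ⟨y, rfl⟩ := QuotientGroup.mk_surjective c
    obtain ⟨e, he, hx⟩ := htor (y : G) y.2
    exact ⟨e, he, (hzero y e).mpr hx⟩
  · intro h
    refine ⟨‹_›, hfg, ?_⟩
    intro x hx
    obtain ⟨e, he, hm⟩ := h (Additive.ofMul (QuotientGroup.mk (⟨x, hx⟩ : ↥N) : commQuot N))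
    exact ⟨e, he, (hzero ⟨x, hx⟩ e).mp hm⟩
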